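/- Let A ∈ ℝ with A ≠ 0 and ε > 0. Define φ_ε : ℝ → ℝ by φ_ε(y) = A·ε for |y| < ε and φ_ε(y) = A·|y| for |y| ≥ ε, and define g_ε : ℝ → ℝ by g_ε(z) = 0 for |z| < ε, g_ε(z) = A for z ≥ ε and g_ε(z) = −A for z ≤ −ε. Set D[φ_ε](y) := φ_ε(y)² + y² − ( ∫₀^y √(1 + g_ε(z)²) dz )² and c := ε·(√(1 + A²) − 1). Then for every y ≥ ε one has D[φ_ε](y) = 2c·√(1 + A²)·y − c²; in particular D[φ_ε](y) → ∞ as y → ∞, so D[φ_ε] is unbounded on ℝ even though φ_ε converges to the homogeneous function φ_{A,A}(y) = A|y| uniformly as ε ↓ 0. -/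

import Mathlib

/-- For `A ≠ 0`, `ε > 0` and the flattened function
`φ_ε(y) = Aε (|y| < ε), A|y| (|y| ≥ ε)` with slope
`g_ε(z) = 0 (|z| < ε), A (z ≥ ε), -A (z ≤ -ε)`, setting
`c = ε(√(1 + A²) - 1)`, one has
`D[φ_ε](y) = 2 c √(1 + A²) y - c²` for every `y ≥ ε`; in particular
`D[φ_ε](y) → ∞` as `y → ∞`. -/
theorem stmt_15 (A ε : ℝ) (hA : A ≠ 0) (hε : 0 < ε)
    (φ g : ℝ → ℝ)
    (hφ : ∀ y, φ y = if |y| < ε then A * ε else A * |y|)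
    (hg : ∀ z, g z = if |z| < ε then 0 else if 0 ≤ z then A else -A)
    (D : ℝ → ℝ)
    (hD : ∀ y, D y = φ y ^ 2 + y ^ 2 - (∫ z in (0:ℝ)..y, Real.sqrt (1 + g z ^ 2)) ^ 2)
    (c : ℝ) (hc : c = ε * (Real.sqrt (1 + A ^ 2) - 1)) :
    (∀ y : ℝ, ε ≤ y → D y = 2 * c * Real.sqrt (1 + A ^ 2) * y - c ^ 2) ∧
      Filter.Tendsto D Filter.atTop Filter.atTop := by
  set s : ℝ := Real.sqrt (1 + A ^ 2) with hs
  have hssq : s ^ 2 = 1 + A ^ 2 := Real.sq_sqrt (by positivity)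
  have hs1 : 1 < s := by
    have hA2 : 0 < A ^ 2 := by positivity
    nlinarith [Real.sqrt_nonneg (1 + A ^ 2)]
  -- the integrand
  have hF : ∀ z, z ≠ ε → Real.sqrt (1 + g z ^ 2) = if |z| < ε then 1 else s := by
    intro z _
    rw [hg z]
    by_cases h : |z| < ε
    · simp [h]
    · simp only [h, if_false]
      by_cases h0 : 0 ≤ z <;> simp [h0, hs]
  have hne : ∀ᵐ x : ℝ, x ≠ ε := by
    rw [MeasureTheory.ae_iff]
    have : {x : ℝ | ¬ x ≠ ε} = {ε} := by ext x; simp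
    rw [this]; simp
  -- integral over [0, ε]
  have hI1 : ∫ z in (0:ℝ)..ε, Real.sqrt (1 + g z ^ 2) = ε := by
    rw [intervalIntegral.integral_congr_ae (g := fun _ => (1:ℝ)) ?_]
    · simp
    · filter_upwards [hne] with x hx hmem
      rw [Set.uIoc_of_le hε.le] at hmem
      rw [hF x hx, if_pos]
      rw [abs_of_pos hmem.1]
      exact lt_of_le_of_ne hmem.2 hx
  -- integrability pieces
  have hint1 : IntervalIntegrable (fun z => Real.sqrt (1 + g z ^ 2)) MeasureTheory.volume 0 ε := by
    rw [intervalIntegrable_iff]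
    apply ((MeasureTheory.integrableOn_const_iff (C := (1:ℝ))).mpr (Or.inr ?_)).congr_fun_ae (f := fun _ => (1:ℝ))
    · filter_upwards [MeasureTheory.ae_restrict_of_ae hne,
        MeasureTheory.ae_restrict_mem measurableSet_uIoc] with x hx hmem
      rw [Set.uIoc_of_le hε.le] at hmem
      rw [hF x hx, if_pos]
      rw [abs_of_pos hmem.1]
      exact lt_of_le_of_ne hmem.2 hx
    · rw [Set.uIoc_of_le hε.le]
      exact measure_Ioc_lt_top
  have key : ∀ y : ℝ, ε ≤ y →
      ∫ z in (0:ℝ)..y, Real.sqrt (1 + g z ^ 2) = s * y - c := by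
    intro y hy
    have heq : ∀ z ∈ Set.uIcc ε y, Real.sqrt (1 + g z ^ 2) = s := by
      intro z hz
      rw [Set.uIcc_of_le hy] at hz
      have hzε : ε ≤ z := hz.1
      have : ¬ |z| < ε := by
        rw [not_lt]; exact le_trans hzε (le_abs_self z)
      rw [hg z, if_neg this, if_pos (le_trans hε.le hzε)]
    have hI2 : ∫ z in ε..y, Real.sqrt (1 + g z ^ 2) = (y - ε) * s := by
      rw [intervalIntegral.integral_congr heq, intervalIntegral.integral_const,
        smul_eq_mul]
    have hint2 : IntervalIntegrable (fun z => Real.sqrt (1 + g z ^ 2))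
        MeasureTheory.volume ε y := by
      rw [intervalIntegrable_iff]
      apply ((MeasureTheory.integrableOn_const_iff (C := s)).mpr (Or.inr ?_)).congr_fun (f := fun _ => s)
      · intro z hz
        exact (heq z (Set.uIoc_subset_uIcc hz)).symm
      · exact measurableSet_uIoc
      · exact measure_Ioc_lt_top
    rw [← intervalIntegral.integral_add_adjacent_intervals hint1 hint2, hI1, hI2, hc]
    ring
  have hmain : ∀ y : ℝ, ε ≤ y → D y = 2 * c * s * y - c ^ 2 := by
    intro y hy
    have hy0 : 0 < y := lt_of_lt_of_le hε hy
    have hφy : φ y = A * y := by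
      rw [hφ y, if_neg (by rw [not_lt, abs_of_pos hy0]; exact hy), abs_of_pos hy0]
    rw [hD y, key y hy, hφy]
    have : (A * y) ^ 2 + y ^ 2 = s ^ 2 * y ^ 2 := by rw [hssq]; ring
    rw [this]; ring
  refine ⟨hmain, ?_⟩
  have hcpos : 0 < c := by
    rw [hc]; exact mul_pos hε (by linarith)
  have hk : 0 < 2 * c * s := by positivity
  apply Filter.Tendsto.congr' (f₁ := fun y => 2 * c * s * y - c ^ 2)
  · filter_upwards [Filter.eventually_ge_atTop ε] with y hy
    exact (hmain y hy).symm
  · apply Filter.tendsto_atTop_add_const_right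
    exact Filter.Tendsto.const_mul_atTop hk Filter.tendsto_id
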